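/- Let p be a prime and L a field of characteristic p that is complete with respect to a nonarchimedean absolute value |·|. Let φ(X) = Σ_{i=d}^{D} c_i X^{p^i} ∈ L[X] with 1 ≤ d ≤ D and |c_i| ≤ 1 for all i. Let a ∈ 𝔽_p[t] be a polynomial with nonzero constant term (i.e. t does not divide a). Then Φ_a(O_L) is an open subgroup of the additive group of L, where O_L := {x ∈ L : |x| ≤ 1}. -/

import Mathlib

/-- The `𝔽_p`-linear map `T_φ : L → L` induced by the additive polynomial
`φ(X) = Σ_{i=d}^{D} c_i X^{p^i}`. -/
noncomputable def specialTphi {L : Type*} [Field L] (p d D : ℕ) (c : ℕ → L) : L → L :=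
  fun x => ∑ i ∈ Finset.Icc d D, c i * x ^ (p ^ i)

/-- For `a ∈ R = 𝔽_p[t]`, written `a = Σ_j a_j t^j`, the induced map
`Φ_a : L → L`, `Φ_a(x) = Σ_j a_j T_φ^{∘j}(x)`. -/
noncomputable def phiAct {L : Type*} [Field L] {p : ℕ} [CharP L p]
    (Tφ : L → L) (a : Polynomial (ZMod p)) (x : L) : L :=
  ∑ j ∈ Finset.range (a.natDegree + 1),
    (ZMod.castHom (dvd_refl p) L (a.coeff j)) * (Tφ^[j] x)

section Aux

variable {L : Type*} [Field L] {p : ℕ} [Fact p.Prime] [CharP L p]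

lemma aux_na_sum_le {v : AbsoluteValue L ℝ} (hna : IsNonarchimedean (v : L → ℝ))
    {ι : Type*} (s : Finset ι) (f : ι → L) {B : ℝ} (hB : 0 ≤ B)
    (h : ∀ i ∈ s, v (f i) ≤ B) : v (∑ i ∈ s, f i) ≤ B := by
  classical
  induction s using Finset.cons_induction with
  | empty => simpa using hB
  | cons a s has ih =>
    rw [Finset.sum_cons]
    refine (hna _ _).trans (max_le (h a (Finset.mem_cons_self a s)) ?_)
    exact ih fun i hi => h i (Finset.mem_cons_of_mem hi)

lemma aux_zmod_abs_le (v : AbsoluteValue L ℝ) (z : ZMod p) :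
    v (ZMod.castHom (dvd_refl p) L z) ≤ 1 := by
  set w : L := ZMod.castHom (dvd_refl p) L z with hw
  have hp : 2 ≤ p := (Fact.out : p.Prime).two_le
  have hwp : w ^ p = w := by
    rw [hw, ← map_pow, ZMod.pow_card]
  by_contra hcon
  push_neg at hcon
  have h1 : v w ≤ (v w) ^ p := le_self_pow₀ hcon.le (by omega)
  have h2 : (v w) * (v w) ≤ (v w) ^ 2 := by ring_nf; nlinarith [v.nonneg w]
  have h3 : (v w) ^ 2 ≤ (v w) ^ p := pow_le_pow_right₀ hcon.le hp
  have : (v w) ^ p = v w := by rw [← map_pow, hwp]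
  nlinarith [v.nonneg w]

lemma aux_zmod_abs_eq_one (v : AbsoluteValue L ℝ) {z : ZMod p} (hz : z ≠ 0) :
    v (ZMod.castHom (dvd_refl p) L z) = 1 := by
  set w : L := ZMod.castHom (dvd_refl p) L z with hw
  have hp : 2 ≤ p := (Fact.out : p.Prime).two_le
  have hwp : w ^ p = w := by rw [hw, ← map_pow, ZMod.pow_card]
  have hwne : w ≠ 0 := by
    rw [hw]
    exact fun h => hz ((ZMod.castHom (dvd_refl p) L).injective (by simpa using h))
  have hpos : 0 < v w := v.pos hwne
  have hle : v w ≤ 1 := aux_zmod_abs_le v z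
  have hpow : (v w) ^ p = v w := by rw [← map_pow, hwp]
  by_contra hne
  have hlt : v w < 1 := lt_of_le_of_ne hle hne
  have : (v w) ^ p < v w := by
    calc (v w) ^ p ≤ (v w) ^ 2 := pow_le_pow_of_le_one hpos.le hle hp
    _ < v w := by nlinarith
  linarith [hpow]

end Aux

/-- Let `L` be a field of characteristic `p`, complete with respect to a
nonarchimedean absolute value `|·|`, let `φ(X) = Σ_{i=d}^{D} c_i X^{p^i}` with `1 ≤ d ≤ D`
and `|c_i| ≤ 1` for all `i`, and let `a ∈ 𝔽_p[t]` have nonzero constant term.  Then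
`Φ_a(O_L)` is an open subgroup of the additive group of `L`, where
`O_L = {x ∈ L : |x| ≤ 1}`. -/
theorem stmt7 {L : Type*} [Field L] (p : ℕ) [Fact p.Prime] [CharP L p]
    (v : AbsoluteValue L ℝ) (hna : IsNonarchimedean (v : L → ℝ))
    [CompleteSpace (WithAbs v)]
    (d D : ℕ) (hd : 1 ≤ d) (hdD : d ≤ D) (c : ℕ → L)
    (hint : ∀ i, d ≤ i → i ≤ D → v (c i) ≤ 1)
    (a : Polynomial (ZMod p)) (ha : a.coeff 0 ≠ 0) :
    ∃ H : AddSubgroup (WithAbs v),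
      (H : Set (WithAbs v)) =
        {y : WithAbs v | ∃ x : L, v x ≤ 1 ∧
          (WithAbs.equiv v).symm (phiAct (specialTphi p d D c) a x) = y} ∧
      IsOpen (H : Set (WithAbs v)) := by
  classical
  have hp2 : 2 ≤ p := (Fact.out : p.Prime).two_le
  set T : L → L := specialTphi p d D c with hT
  -- Additivity of T
  have hTadd : ∀ x y : L, T (x + y) = T x + T y := by
    intro x y
    simp only [hT, specialTphi]
    rw [← Finset.sum_add_distrib]
    refine Finset.sum_congr rfl fun i _ => ?_
    rw [add_pow_char_pow, mul_add]
  have hT0 : T 0 = 0 := by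
    simp only [hT, specialTphi]
    refine Finset.sum_eq_zero fun i _ => ?_
    rw [zero_pow (by positivity), mul_zero]
  -- Norm bound on T
  have hTb : ∀ x : L, v x ≤ 1 → v (T x) ≤ v x ^ p := by
    intro x hx
    refine aux_na_sum_le hna _ _ (by positivity) fun i hi => ?_
    rw [Finset.mem_Icc] at hi
    rw [map_mul, map_pow]
    calc v (c i) * v x ^ p ^ i ≤ v x ^ p ^ i :=
          mul_le_of_le_one_left (by positivity) (hint i hi.1 hi.2)
      _ ≤ v x ^ p := by
          refine pow_le_pow_of_le_one (v.nonneg x) hx ?_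
          calc p = p ^ 1 := (pow_one p).symm
            _ ≤ p ^ i := Nat.pow_le_pow_right (by omega) (by omega)
  have hTle : ∀ x : L, v x ≤ 1 → v (T x) ≤ v x := by
    intro x hx
    exact (hTb x hx).trans (pow_le_of_le_one (v.nonneg x) hx (by omega))
  have hiter_le : ∀ (j : ℕ) (x : L), v x ≤ 1 → v (T^[j] x) ≤ v x := by
    intro j
    induction j with
    | zero => intro x hx; simp
    | succ n ih =>
      intro x hx
      rw [Function.iterate_succ_apply']
      exact (hTle _ ((ih x hx).trans hx)).trans (ih x hx)
  have hiter_b : ∀ (j : ℕ) (x : L), v x ≤ 1 → v (T^[j + 1] x) ≤ v x ^ p := by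
    intro j x hx
    rw [Function.iterate_succ_apply']
    refine (hTb _ ((hiter_le j x hx).trans hx)).trans ?_
    exact pow_le_pow_left₀ (v.nonneg _) (hiter_le j x hx) p
  -- Constant term and the rest
  set N := a.natDegree with hN
  set a0 : L := ZMod.castHom (dvd_refl p) L (a.coeff 0) with ha0
  have ha0ne : a0 ≠ 0 := by
    rw [ha0]
    exact fun h => ha ((ZMod.castHom (dvd_refl p) L).injective (by simpa using h))
  have ha0v : v a0 = 1 := aux_zmod_abs_eq_one v ha
  set F : L → L := fun x => ∑ j ∈ Finset.range N,
    (ZMod.castHom (dvd_refl p) L (a.coeff (j + 1))) * T^[j + 1] x with hF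
  have hsplit : ∀ x : L, phiAct T a x = a0 * x + F x := by
    intro x
    rw [phiAct, Finset.sum_range_succ']
    simp only [Function.iterate_zero, id_eq]
    rw [add_comm]
  have hFadd : ∀ x y : L, F (x + y) = F x + F y := by
    intro x y
    simp only [hF]
    rw [← Finset.sum_add_distrib]
    refine Finset.sum_congr rfl fun j _ => ?_
    have : ∀ (k : ℕ) (u w : L), T^[k] (u + w) = T^[k] u + T^[k] w := by
      intro k
      induction k with
      | zero => intro u w; simp
      | succ n ih =>
        intro u w
        rw [Function.iterate_succ_apply', Function.iterate_succ_apply',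
          Function.iterate_succ_apply', ih, hTadd]
    rw [this, mul_add]
  have hF0 : F 0 = 0 := by
    simp only [hF]
    refine Finset.sum_eq_zero fun j _ => ?_
    rw [Function.iterate_fixed hT0, mul_zero]
  have hFneg : ∀ x : L, F (-x) = -F x := by
    intro x
    have h := hFadd x (-x)
    rw [add_neg_cancel, hF0] at h
    linear_combination -h
  have hFb : ∀ x : L, v x ≤ 1 → v (F x) ≤ v x ^ p := by
    intro x hx
    refine aux_na_sum_le hna _ _ (by positivity) fun j _ => ?_
    rw [map_mul]
    calc v (ZMod.castHom (dvd_refl p) L (a.coeff (j + 1))) * v (T^[j + 1] x)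
        ≤ v (T^[j + 1] x) :=
          mul_le_of_le_one_left (v.nonneg _) (aux_zmod_abs_le v _)
      _ ≤ v x ^ p := hiter_b j x hx
  -- abbreviations relating L and WithAbs v
  set e : WithAbs v ≃ L := (WithAbs.equiv v).toEquiv with he
  have hnorm : ∀ z : L, ‖e.symm z‖ = v z := fun _ => rfl
  have hnorm' : ∀ z : WithAbs v, ‖z‖ = v (e z) := fun _ => rfl
  -- additivity of Φ
  have hΦadd : ∀ x y : L, phiAct T a (x + y) = phiAct T a x + phiAct T a y := by
    intro x y
    rw [hsplit, hsplit, hsplit, hFadd]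
    ring
  have hΦneg : ∀ x : L, phiAct T a (-x) = -phiAct T a x := by
    intro x
    rw [hsplit, hsplit, hFneg]
    ring
  have hΦ0 : phiAct T a 0 = 0 := by
    rw [hsplit, hF0, mul_zero, add_zero]
  -- the subgroup
  have hcarr : {y : WithAbs v | ∃ x : L, v x ≤ 1 ∧
      e.symm (phiAct T a x) = y} = {y : WithAbs v | ∃ x : L, v x ≤ 1 ∧
      (WithAbs.equiv v).symm (phiAct (specialTphi p d D c) a x) = y} := rfl
  refine ⟨{ carrier := {y : WithAbs v | ∃ x : L, v x ≤ 1 ∧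
                  e.symm (phiAct T a x) = y}
            add_mem' := ?_
            zero_mem' := ?_
            neg_mem' := ?_ }, hcarr, ?_⟩
  · rintro y₁ y₂ ⟨x₁, hx₁, rfl⟩ ⟨x₂, hx₂, rfl⟩
    refine ⟨x₁ + x₂, (hna x₁ x₂).trans (max_le hx₁ hx₂), ?_⟩
    rw [hΦadd]
    rfl
  · exact ⟨0, by simp, by rw [hΦ0]; rfl⟩
  · rintro y ⟨x, hx, rfl⟩
    refine ⟨-x, by rw [v.map_neg]; exact hx, ?_⟩
    rw [hΦneg]
    rfl
  -- openness: the image contains the closed ball of radius 1/2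
  have hball : ∀ y : L, v y ≤ 1 / 2 → ∃ x : L, v x ≤ 1 / 2 ∧ phiAct T a x = y := by
    intro y hy
    set G : L → L := fun x => a0⁻¹ * (y - F x) with hG
    have hGmaps : ∀ z : L, v z ≤ 1 / 2 → v (G z) ≤ 1 / 2 := by
      intro z hz
      have hz1 : v z ≤ 1 := hz.trans (by norm_num)
      have h1 : v (G z) = v (y - F z) := by
        rw [hG]
        simp only [map_mul, map_inv₀, ha0v, inv_one, one_mul]
      rw [h1, sub_eq_add_neg]
      refine (hna _ _).trans (max_le hy ?_)
      rw [v.map_neg]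
      calc v (F z) ≤ v z ^ p := hFb z hz1
        _ ≤ v z := pow_le_of_le_one (v.nonneg z) hz1 (by omega)
        _ ≤ 1 / 2 := hz
    have hGlip : ∀ z z' : L, v z ≤ 1 / 2 → v z' ≤ 1 / 2 →
        v (G z - G z') ≤ (1 / 2) * v (z - z') := by
      intro z z' hz hz'
      have hsub : G z - G z' = a0⁻¹ * F (z' - z) := by
        rw [hG]
        simp only
        have : F (z' - z) = F z' - F z := by
          rw [sub_eq_add_neg, hFadd, hFneg, ← sub_eq_add_neg]
        rw [this]
        ring
      have hw : v (z' - z) ≤ 1 / 2 := by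
        rw [sub_eq_add_neg]
        refine (hna _ _).trans (max_le hz' ?_)
        rw [v.map_neg]; exact hz
      have hw1 : v (z' - z) ≤ 1 := hw.trans (by norm_num)
      rw [hsub, map_mul, map_inv₀, ha0v, inv_one, one_mul]
      calc v (F (z' - z)) ≤ v (z' - z) ^ p := hFb _ hw1
        _ = v (z' - z) ^ (p - 1) * v (z' - z) := by
            rw [← pow_succ]; congr 1; omega
        _ ≤ (1 / 2) * v (z' - z) := by
            refine mul_le_mul_of_nonneg_right ?_ (v.nonneg _)
            calc v (z' - z) ^ (p - 1) ≤ v (z' - z) :=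
                  pow_le_of_le_one (v.nonneg _) hw1 (by omega)
              _ ≤ 1 / 2 := hw
        _ = (1 / 2) * v (z - z') := by rw [v.map_sub]
    -- contraction on the closed ball
    set S : Set (WithAbs v) := Metric.closedBall 0 (1 / 2) with hS
    haveI : CompleteSpace S := Metric.isClosed_closedBall.completeSpace_coe
    haveI : Nonempty S := ⟨⟨0, by simp [hS]⟩⟩
    have hmemS : ∀ z : WithAbs v, z ∈ S ↔ v (e z) ≤ 1 / 2 := by
      intro z
      rw [hS, Metric.mem_closedBall, dist_zero_right, hnorm']
    set g : S → S := fun x => ⟨e.symm (G (e ↑x)),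
      (hmemS _).2 (by
        rw [Equiv.apply_symm_apply]
        exact hGmaps _ ((hmemS _).1 x.2))⟩ with hg
    have hcontr : ContractingWith (1 / 2 : NNReal) g := by
      constructor
      · rw [← NNReal.coe_lt_coe]; norm_num
      · refine LipschitzWith.of_dist_le_mul fun x x' => ?_
        simp only [Subtype.dist_eq, dist_eq_norm]
        have h1 : ((g x : WithAbs v) - (g x' : WithAbs v)) =
            e.symm (G (e ↑x) - G (e ↑x')) := rfl
        have h2 : ((x : WithAbs v) - (x' : WithAbs v)) =
            e.symm (e ↑x - e ↑x') := rfl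
        rw [h1, h2, hnorm, hnorm]
        have := hGlip (e ↑x) (e ↑x') ((hmemS _).1 x.2) ((hmemS _).1 x'.2)
        calc v (G (e ↑x) - G (e ↑x')) ≤ (1 / 2) * v (e ↑x - e ↑x') := this
          _ = ((1 / 2 : NNReal) : ℝ) * v (e ↑x - e ↑x') := by norm_num
    obtain ⟨x₀S, hx₀⟩ : ∃ x : S, g x = x :=
      ⟨ContractingWith.fixedPoint g hcontr, hcontr.fixedPoint_isFixedPt⟩
    set x₀ : L := e ↑x₀S with hx₀def
    have hx₀mem : v x₀ ≤ 1 / 2 := (hmemS _).1 x₀S.2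
    have hfix : G x₀ = x₀ := by
      have h1 : (↑(g x₀S) : WithAbs v) = ↑x₀S := by rw [hx₀]
      have h2 : (↑(g x₀S) : WithAbs v) = e.symm (G x₀) := rfl
      rw [h2] at h1
      calc G x₀ = e (e.symm (G x₀)) := (Equiv.apply_symm_apply e _).symm
        _ = e ↑x₀S := by rw [h1]
        _ = x₀ := rfl
    refine ⟨x₀, hx₀mem, ?_⟩
    rw [hsplit]
    have h3 : a0 * G x₀ = y - F x₀ := by
      rw [hG]
      field_simp
    rw [hfix] at h3
    linear_combination h3
  -- conclude openness
  refine AddSubgroup.isOpen_of_mem_nhds (g := (0 : WithAbs v)) _ ?_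
  refine Filter.mem_of_superset (Metric.closedBall_mem_nhds (0 : WithAbs v)
    (by norm_num : (0 : ℝ) < 1 / 2)) ?_
  intro y hy
  rw [Metric.mem_closedBall, dist_zero_right, hnorm'] at hy
  obtain ⟨x, hx, hΦx⟩ := hball (e y) hy
  exact ⟨x, hx.trans (by norm_num), by rw [hΦx]; exact Equiv.symm_apply_apply e y⟩
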